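/- Let f be a holomorphic function on (ℂˣ)ⁿ := {z ∈ ℂⁿ : zᵢ ≠ 0 for all i} that is not identically zero. Then f does not vanish identically on any nonempty open subset of 𝕊₁ⁿ (in the subspace topology of 𝕊₁ⁿ); i.e., there is no nonempty open subset O of 𝕊₁ⁿ with f(z) = 0 for all z ∈ O. -/

import Mathlib

open scoped BigOperators

noncomputable section

/-- Laurent polynomials in `n` variables over `ℂ`, given by finitely supported
coefficient functions on the exponent lattice `ℤⁿ`. -/
abbrev LaurentPoly (n : ℕ) : Type := (Fin n → ℤ) →₀ ℂ

/-- Evaluation of a Laurent polynomial at a point of the torus `(ℂˣ)ⁿ`. -/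
def LaurentPoly.eval {n : ℕ} (p : LaurentPoly n) (w : Fin n → ℂˣ) : ℂ :=
  ∑ k ∈ p.support, p k * ∏ i, ((w i : ℂ) ^ (k i))

/-- The Zariski topology on the torus `(ℂˣ)ⁿ`: generated by complements of
zero sets of Laurent polynomials. -/
def zariskiTorus (n : ℕ) : TopologicalSpace (Fin n → ℂˣ) :=
  TopologicalSpace.generateFrom
    {U | ∃ p : LaurentPoly n, U = {w | LaurentPoly.eval p w ≠ 0}}

/-- An algebraic subvariety of `(ℂˣ)ⁿ`: the common zero set of finitely many
Laurent polynomials. -/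
def IsSubvariety {n : ℕ} (W : Set (Fin n → ℂˣ)) : Prop :=
  ∃ F : Finset (LaurentPoly n), W = {w | ∀ p ∈ F, LaurentPoly.eval p w = 0}

/-- An irreducible algebraic subvariety of `(ℂˣ)ⁿ`. -/
def IsIrrSubvariety {n : ℕ} (W : Set (Fin n → ℂˣ)) : Prop :=
  IsSubvariety W ∧ @IsIrreducible _ (zariskiTorus n) W

/-- A `ℚ`-linear subspace of `ℂⁿ`: a `ℂ`-subspace spanned by vectors with
rational coordinates. -/
def IsQLinear {n : ℕ} (Q : Submodule ℂ (Fin n → ℂ)) : Prop :=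
  ∃ S : Set (Fin n → ℚ), Q = Submodule.span ℂ ((fun v => fun i => ((v i : ℚ) : ℂ)) '' S)

/-- A `ℂ`-linear subspace of `ℂⁿ` defined over `ℝ`: spanned over `ℂ` by vectors
with real coordinates. -/
def IsRealDefined {n : ℕ} (L : Submodule ℂ (Fin n → ℂ)) : Prop :=
  ∃ S : Set (Fin n → ℝ), L = Submodule.span ℂ ((fun v => fun i => ((v i : ℝ) : ℂ)) '' S)

/-- The coordinatewise exponential map `ℂⁿ → (ℂˣ)ⁿ`. -/
def expMap {n : ℕ} (z : Fin n → ℂ) : Fin n → ℂˣ :=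
  fun i => Units.mk0 (Complex.exp (z i)) (Complex.exp_ne_zero _)

/-- The subgroup `exp(Q)` of `(ℂˣ)ⁿ`, for `Q` a subspace of `ℂⁿ`. -/
def expSubgroup {n : ℕ} (Q : Submodule ℂ (Fin n → ℂ)) : Subgroup (Fin n → ℂˣ) where
  carrier := expMap '' (Q : Set (Fin n → ℂ))
  one_mem' := ⟨0, Q.zero_mem, by ext i; simp [expMap]⟩
  mul_mem' := by
    rintro _ _ ⟨a, ha, rfl⟩ ⟨b, hb, rfl⟩
    exact ⟨a + b, Q.add_mem ha hb, by ext i; simp [expMap, Complex.exp_add]⟩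
  inv_mem' := by
    rintro _ ⟨a, ha, rfl⟩
    exact ⟨-a, Q.neg_mem ha, by ext i; simp [expMap, Complex.exp_neg]⟩

/-- A subset `V ⊆ ℂⁿ × (ℂˣ)ⁿ` is additively free if its projection to `ℂⁿ` is not
contained in any translate of a proper `ℚ`-linear subspace of `ℂⁿ`. -/
def AdditivelyFree {n : ℕ} (V : Set ((Fin n → ℂ) × (Fin n → ℂˣ))) : Prop :=
  ∀ (a : Fin n → ℂ) (Q : Submodule ℂ (Fin n → ℂ)), IsQLinear Q → Q ≠ ⊤ →
    ¬ (Prod.fst '' V ⊆ {z | z - a ∈ Q})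

/-- Regular functions on `ℂⁿ × (ℂˣ)ⁿ`: polynomials in the first `n` variables and
Laurent polynomials in the last `n` variables. -/
abbrev PolyLaurent (n : ℕ) : Type := (Fin n → ℤ) →₀ MvPolynomial (Fin n) ℂ

/-- Evaluation of a regular function on `ℂⁿ × (ℂˣ)ⁿ`. -/
def PolyLaurent.eval {n : ℕ} (p : PolyLaurent n)
    (zw : (Fin n → ℂ) × (Fin n → ℂˣ)) : ℂ :=
  ∑ k ∈ p.support, MvPolynomial.eval zw.1 (p k) * ∏ i, ((zw.2 i : ℂ) ^ (k i))

/-- The Zariski topology on `ℂⁿ × (ℂˣ)ⁿ`. -/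
def zariskiProd (n : ℕ) : TopologicalSpace ((Fin n → ℂ) × (Fin n → ℂˣ)) :=
  TopologicalSpace.generateFrom
    {U | ∃ p : PolyLaurent n, U = {zw | PolyLaurent.eval p zw ≠ 0}}

/-- The quotient map `π_Q : ℂⁿ × (ℂˣ)ⁿ → (ℂⁿ/Q) × ((ℂˣ)ⁿ/exp(Q))`. -/
def piQ {n : ℕ} (Q : Submodule ℂ (Fin n → ℂ)) :
    (Fin n → ℂ) × (Fin n → ℂˣ) →
      ((Fin n → ℂ) ⧸ Q) × ((Fin n → ℂˣ) ⧸ expSubgroup Q) :=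
  fun p => (Submodule.Quotient.mk p.1, QuotientGroup.mk p.2)

/-- The Zariski topology on the quotient `(ℂⁿ/Q) × ((ℂˣ)ⁿ/exp(Q))`, coinduced
along `π_Q` from the Zariski topology on `ℂⁿ × (ℂˣ)ⁿ`. -/
def zariskiQuot {n : ℕ} (Q : Submodule ℂ (Fin n → ℂ)) :
    TopologicalSpace (((Fin n → ℂ) ⧸ Q) × ((Fin n → ℂˣ) ⧸ expSubgroup Q)) :=
  (zariskiProd n).coinduced (piQ Q)

/-- The dimension of a subset `S` of a topological space: the topological Krull
dimension of `S` with the subspace topology. -/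
def zdim {α : Type*} (t : TopologicalSpace α) (S : Set α) : WithBot ℕ∞ :=
  @topologicalKrullDim S (TopologicalSpace.induced Subtype.val t)

/-- `V ⊆ ℂⁿ × (ℂˣ)ⁿ` is rotund if for every `ℚ`-linear subspace `Q ≤ ℂⁿ`, the
dimension of the Zariski closure of `π_Q(V)` is at least `n - dim Q`. -/
def Rotund {n : ℕ} (V : Set ((Fin n → ℂ) × (Fin n → ℂˣ))) : Prop :=
  ∀ Q : Submodule ℂ (Fin n → ℂ), IsQLinear Q →
    (((n - Module.finrank ℂ Q : ℕ) : ℕ∞) : WithBot ℕ∞) ≤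
      zdim (zariskiQuot Q) (@closure _ (zariskiQuot Q) (piQ Q '' V))

/-- The `δ`-map of a subvariety of `ℂⁿ × (ℂˣ)ⁿ`: `(z, w) ↦ w · exp(-z)`. -/
def deltaMap {n : ℕ} : ((Fin n → ℂ) × (Fin n → ℂˣ)) → (Fin n → ℂˣ) :=
  fun p => fun i => p.2 i * (expMap p.1 i)⁻¹

/-- The `δ`-map of `V` is open at `p ∈ V` if there is an open neighbourhood of `p`
in `V` (subspace topology, standard/Euclidean) on which `δ` restricts to an open
map into `(ℂˣ)ⁿ`. -/
def DeltaOpenAt {n : ℕ} (V : Set ((Fin n → ℂ) × (Fin n → ℂˣ)))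
    (p : (Fin n → ℂ) × (Fin n → ℂˣ)) : Prop :=
  ∃ N : Set ((Fin n → ℂ) × (Fin n → ℂˣ)), IsOpen N ∧ p ∈ N ∧
    ∀ O : Set ((Fin n → ℂ) × (Fin n → ℂˣ)), IsOpen O →
      IsOpen (deltaMap '' (O ∩ N ∩ V))

/-- The map `Log : (ℂˣ)ⁿ → ℝⁿ`, `w ↦ (log |w₁|, …, log |wₙ|)`. -/
def torusLog {n : ℕ} (w : Fin n → ℂˣ) : Fin n → ℝ :=
  fun i => Real.log ‖(w i : ℂ)‖

/-- The amoeba of `W ⊆ (ℂˣ)ⁿ`: the image of `W` under `Log`. -/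
def amoeba {n : ℕ} (W : Set (Fin n → ℂˣ)) : Set (Fin n → ℝ) :=
  torusLog '' W

/-- The coordinatewise real part of a subset of `ℂⁿ`. -/
def rePart {n : ℕ} (L : Set (Fin n → ℂ)) : Set (Fin n → ℝ) :=
  (fun z => fun i => (z i).re) '' L

/-- The unit polycircle `𝕊₁ⁿ ⊆ (ℂˣ)ⁿ`. -/
def unitTorus (n : ℕ) : Set (Fin n → ℂˣ) :=
  {w | ∀ i, ‖(w i : ℂ)‖ = 1}

/-- `S` is Zariski-dense in `W` if every Laurent polynomial vanishing on `S`
vanishes identically on `W`. -/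
def ZariskiDenseIn {n : ℕ} (S W : Set (Fin n → ℂˣ)) : Prop :=
  ∀ p : LaurentPoly n, (∀ w ∈ S, LaurentPoly.eval p w = 0) →
    ∀ w ∈ W, LaurentPoly.eval p w = 0

/-- The linear functional `z ↦ k₁z₁ + … + kₙzₙ` attached to `k ∈ ℤⁿ`. -/
def intFunctional {n : ℕ} (k : Fin n → ℤ) : Module.Dual ℂ (Fin n → ℂ) :=
  ∑ i, (k i : ℂ) • (LinearMap.proj i : (Fin n → ℂ) →ₗ[ℂ] ℂ)

/-- The Newton polytope of a Laurent polynomial, as a subset of the dual space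
`(ℂⁿ)^∨` regarded as a real vector space. -/
def newtonPolytope {n : ℕ} (p : LaurentPoly n) : Set (Module.Dual ℂ (Fin n → ℂ)) :=
  convexHull ℝ (intFunctional '' (p.support : Set (Fin n → ℤ)))

/-- Finite subsets `A₁, …, A_d` of a `ℂ`-vector space satisfy the Rado property if
there is a basis `v₁, …, v_d` of the space with `vⱼ ∈ Aⱼ` for each `j`. -/
def RadoProperty {d : ℕ} {V : Type*} [AddCommGroup V] [Module ℂ V]
    (A : Fin d → Set V) : Prop :=
  ∃ v : Fin d → V, (∀ j, v j ∈ A j) ∧ LinearIndependent ℂ v ∧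
    Submodule.span ℂ (Set.range v) = ⊤

lemma freq_circle (c : ℂ) (hc : ‖c‖ = 1) (ε : ℝ) (hε : 0 < ε) :
    ∃ᶠ w in nhdsWithin c {c}ᶜ, ‖w‖ = 1 ∧ dist w c < ε := by
  have hc0 : c ≠ 0 := by intro h; rw [h] at hc; simp at hc
  set φ : ℝ → ℂ := fun t => c * Complex.exp (t * Complex.I) with hφ
  have hcont : Filter.Tendsto φ (nhdsWithin (0:ℝ) {(0:ℝ)}ᶜ) (nhds c) := by
    have hC : Continuous φ := continuous_const.mul (Complex.continuous_exp.comp ((Complex.continuous_ofReal).mul continuous_const))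
    have := hC.tendsto 0
    simp only [hφ, Complex.ofReal_zero, zero_mul, Complex.exp_zero, mul_one] at this
    exact this.mono_left nhdsWithin_le_nhds
  have hne : ∀ᶠ t in nhdsWithin (0:ℝ) {(0:ℝ)}ᶜ, φ t ≠ c := by
    have h1 : ∀ᶠ t in nhdsWithin (0:ℝ) {(0:ℝ)}ᶜ, t ∈ Set.Ioo (-1:ℝ) 1 :=
      eventually_nhdsWithin_of_eventually_nhds (Ioo_mem_nhds (by norm_num) (by norm_num))
    have h2 : ∀ᶠ t in nhdsWithin (0:ℝ) {(0:ℝ)}ᶜ, t ≠ 0 := eventually_mem_nhdsWithin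
    filter_upwards [h1, h2] with t ht ht0 habs
    have hexp : Complex.exp (t * Complex.I) = 1 :=
      mul_left_cancel₀ hc0 (habs.trans (mul_one c).symm)
    rw [Complex.exp_eq_one_iff] at hexp
    obtain ⟨k, hk⟩ := hexp
    have hI : (t : ℂ) = (k : ℂ) * (2 * (Real.pi : ℂ)) := by
      rw [show ((k:ℂ) * (2 * (Real.pi:ℂ) * Complex.I)) = ((k:ℂ) * (2 * (Real.pi:ℂ))) * Complex.I
        by ring] at hk
      exact mul_right_cancel₀ Complex.I_ne_zero hk
    have htr : t = (k : ℝ) * (2 * Real.pi) := by exact_mod_cast hI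
    rcases eq_or_ne k 0 with hk0 | hk0
    · rw [hk0] at htr; simp at htr; exact ht0 htr
    · have h1k : (1:ℝ) ≤ |(k:ℝ)| := by exact_mod_cast Int.one_le_abs hk0
      have habst : |t| < 1 := abs_lt.mpr ⟨ht.1, ht.2⟩
      have : |t| = |(k:ℝ)| * (2 * Real.pi) := by
        rw [htr, abs_mul, abs_of_pos Real.two_pi_pos]
      nlinarith [Real.pi_gt_three]
  have htend : Filter.Tendsto φ (nhdsWithin (0:ℝ) {(0:ℝ)}ᶜ)
      (nhdsWithin c {c}ᶜ) := by
    rw [tendsto_nhdsWithin_iff]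
    exact ⟨hcont, hne.mono fun t ht => ht⟩
  have habs1 : ∀ t : ℝ, ‖φ t‖ = 1 := by
    intro t
    simp only [hφ, norm_mul, hc, Complex.norm_exp, one_mul]
    have : ((t:ℂ) * Complex.I).re = 0 := by simp [Complex.mul_re]
    rw [this, Real.exp_zero]
  have hdist : ∀ᶠ t in nhdsWithin (0:ℝ) {(0:ℝ)}ᶜ, dist (φ t) c < ε := by
    have := hcont (Metric.ball_mem_nhds c hε)
    exact this
  apply htend.frequently
  exact (hdist.mono fun t ht => ⟨habs1 t, ht⟩).frequently

/-- A holomorphic function on `(ℂˣ)ⁿ` (as an open subset of `ℂⁿ`) that is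
not identically zero does not vanish identically on any nonempty relatively open subset
of the unit polycircle `𝕊₁ⁿ`. -/
theorem stmt_15 {n : ℕ} (f : (Fin n → ℂ) → ℂ)
    (hf : DifferentiableOn ℂ f {z : Fin n → ℂ | ∀ i, z i ≠ 0})
    (hne : ∃ z ∈ {z : Fin n → ℂ | ∀ i, z i ≠ 0}, f z ≠ 0) :
    ∀ U : Set (Fin n → ℂ), IsOpen U →
      ({z : Fin n → ℂ | ∀ i, ‖z i‖ = 1} ∩ U).Nonempty →
      ∃ z ∈ {z : Fin n → ℂ | ∀ i, ‖z i‖ = 1} ∩ U, f z ≠ 0 := by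
  intro U hU hUne
  obtain ⟨ζ, hζT, hζU⟩ := hUne
  by_contra hcon
  push_neg at hcon
  obtain ⟨ε, hε, hball⟩ := Metric.isOpen_iff.mp hU ζ hζU
  set A : Fin n → Set ℂ := fun i => {w : ℂ | ‖w‖ = 1 ∧ dist w (ζ i) < ε} with hA
  have key : ∀ m : ℕ, ∀ z : Fin n → ℂ, (∀ i, z i ≠ 0) →
      (∀ i : Fin n, m ≤ (i : ℕ) → z i ∈ A i) → f z = 0 := by
    intro m
    induction m with
    | zero =>
      intro z hz0 hzA
      refine hcon z ⟨fun i => (hzA i (Nat.zero_le _)).1, hball ?_⟩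
      rw [Metric.mem_ball, dist_pi_lt_iff hε]
      exact fun i => (hzA i (Nat.zero_le _)).2
    | succ m ih =>
      intro z hz0 hzA
      by_cases hmn : m < n
      · set j : Fin n := ⟨m, hmn⟩ with hj
        set g : ℂ → ℂ := fun w => f (Function.update z j w) with hg
        have hupd : ∀ w : ℂ, w ≠ 0 → ∀ i, Function.update z j w i ≠ 0 := by
          intro w hw i
          rcases eq_or_ne i j with rfl | hij
          · simpa using hw
          · simpa [Function.update_apply, hij] using hz0 i
        have hgd : DifferentiableOn ℂ g {w : ℂ | w ≠ 0} := by
          have hdiff : Differentiable ℂ (fun w : ℂ => Function.update z j w) := by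
            rw [differentiable_pi]
            intro i
            rcases eq_or_ne i j with rfl | hij
            · simpa [Function.update_apply] using differentiable_id
            · simpa [Function.update_apply, hij] using differentiable_const (z i)
          exact hf.comp hdiff.differentiableOn (fun w hw => hupd w hw)
        have hgan : AnalyticOnNhd ℂ g {w : ℂ | w ≠ 0} :=
          hgd.analyticOnNhd isOpen_ne
        have hpre : IsPreconnected {w : ℂ | w ≠ 0} := by
          have h2 := (isConnected_compl_singleton_of_one_lt_rank
            (by rw [Complex.rank_real_complex]; norm_num) (0:ℂ)).isPreconnected
          exact h2
        have hζj : ζ j ∈ {w : ℂ | w ≠ 0} := by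
          intro h
          have := hζT j
          rw [h] at this
          simp at this
        have hfreq : ∃ᶠ w in nhdsWithin (ζ j) {ζ j}ᶜ, g w = 0 := by
          apply (freq_circle (ζ j) (hζT j) ε hε).mono
          intro w hw
          have hw0 : w ≠ 0 := by
            intro h0; rw [h0] at hw; simp at hw
          apply ih _ (hupd w hw0)
          intro i hi
          rcases eq_or_ne i j with rfl | hij
          · simpa [hA] using hw
          · rw [Function.update_apply, if_neg hij]
            apply hzA
            have hij' : (i : ℕ) ≠ m := fun h => hij (Fin.ext h)
            omega
        have heq := hgan.eqOn_zero_of_preconnected_of_frequently_eq_zero hpre hζj hfreq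
        have hz := heq (hz0 j)
        simpa [hg, Function.update_eq_self] using hz
      · exact ih z hz0 (fun i hi => absurd hi (by have := i.isLt; omega))
  obtain ⟨z, hz, hfz⟩ := hne
  exact hfz (key n z hz (fun i hi => absurd hi (by have := i.isLt; omega)))
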